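/- Explicit composition failure for doctor-proposing Gale–Shapley: let D = {i1, i2, j} with clusters {i1, i2} and {j}, and H = {A, B, C}. Doctor preferences: A ≻_{i1} B ≻_{i1} C; A ≻_{i2} C ≻_{i2} B; C ≻_j A ≻_j B. Consider all preference profiles in which hospital A's strict order on D is j ≻ i1 ≻ i2 or j ≻ i2 ≻ i1, hospital B's order is i1 ≻ i2 ≻ j or i2 ≻ i1 ≻ j, and hospital C's order is i1 ≻ i2 ≻ j or i2 ≻ i1 ≻ j. Then: (1) for every such profile in which A ranks i1 above i2, the matching m1 = {i1 ↦ B, i2 ↦ C, j ↦ A} is the doctor-optimal stable matching; (2) for every such profile in which A ranks i2 above i1, the matching m2 = {i1 ↦ B, i2 ↦ A, j ↦ C} is the doctor-optimal stable matching; and (3) the allocation π = (1/2)·δ_{m1} + (1/2)·δ_{m2} is not PIIF with respect to the proto-metric: the prospect of i1 does not stochastically dominate the prospect of i2 with respect to ≻_{i1} (i1 is matched to its top choice A with probability 0 while i2 is matched to A with probability 1/2). -/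
import Mathlib


open Finset

/-- A probabilistic allocation: a finitely supported probability distribution over
matchings (bijections between doctors `D` and hospitals `H`). -/
def IsAlloc {D H : Type*} [Fintype D] [Fintype H] [DecidableEq D] [DecidableEq H]
    (π : (D ≃ H) → ℝ) : Prop :=
  (∀ m, 0 ≤ π m) ∧ (∑ m : D ≃ H, π m) = 1

/-- The prospect of doctor `i` under the allocation `π`: the probability that `i`
is matched to hospital `h`. -/
def prospect {D H : Type*} [Fintype D] [Fintype H] [DecidableEq D] [DecidableEq H]
    (π : (D ≃ H) → ℝ) (i : D) (h : H) : ℝ :=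
  ∑ m : D ≃ H, if m i = h then π m else 0

/-- `p` is a probability distribution on `H`. -/
def IsDist {H : Type*} [Fintype H] (p : H → ℝ) : Prop :=
  (∀ h, 0 ≤ p h) ∧ (∑ h : H, p h) = 1

/-- Total variation distance between two distributions on `H`. -/
noncomputable def TV {H : Type*} [Fintype H] (p q : H → ℝ) : ℝ :=
  (1 / 2) * ∑ h : H, |p h - q h|

/-- `p` stochastically dominates `q` with respect to the strict preference relation
`pref` (where `pref x y` means `x` is strictly preferred to `y`): for every `h`, the
probability of an outcome at least as good as `h` under `p` is at least that under `q`. -/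
def SDom {H : Type*} [Fintype H] (pref : H → H → Prop) (p q : H → ℝ) : Prop :=
  ∀ h : H,
    (∑ h' : H, Set.indicator {x : H | pref x h ∨ x = h} q h') ≤
      ∑ h' : H, Set.indicator {x : H | pref x h ∨ x = h} p h'

/-- Preference-informed individual fairness with respect to a (pseudo)metric `d`,
total variation distance, and the doctors' strict preferences `pref`. -/
def PIIF {D H : Type*} [Fintype D] [Fintype H] [DecidableEq D] [DecidableEq H]
    (d : D → D → ℝ) (pref : D → H → H → Prop) (π : (D ≃ H) → ℝ) : Prop :=
  ∀ i j : D, ∃ p : H → ℝ,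
    IsDist p ∧ TV p (prospect π j) ≤ d i j ∧ SDom (pref i) (prospect π i) p

/-- PIIF with respect to the proto-metric induced by the cluster map `c`: the prospect
of every doctor stochastically dominates the prospect of every doctor in its cluster. -/
def ClusterPIIF {D H K : Type*} [Fintype D] [Fintype H] [DecidableEq D] [DecidableEq H]
    (c : D → K) (pref : D → H → H → Prop) (π : (D ≃ H) → ℝ) : Prop :=
  ∀ i j : D, c i = c j → SDom (pref i) (prospect π i) (prospect π j)

namespace Stmt4

/-! Doctors: `i1 = 0`, `i2 = 1`, `j = 2`.  Hospitals: `A = 0`, `B = 1`, `C = 2`.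
Clusters: `{i1, i2}` (cluster `0`) and `{j}` (cluster `1`). -/

/-- The cluster map: `i1` and `i2` are in one cluster, `j` in another. -/
def c : Fin 3 → Fin 2 := ![0, 0, 1]

/-- Rank functions of the doctors over the hospitals (rank `0` is best):
`A ≻_{i1} B ≻_{i1} C`, `A ≻_{i2} C ≻_{i2} B`, `C ≻_j A ≻_j B`. -/
def drk : Fin 3 → Fin 3 → ℕ := ![![0, 1, 2], ![0, 2, 1], ![1, 2, 0]]

/-- Doctor `i` strictly prefers hospital `h1` to hospital `h2`. -/
def dpref (i : Fin 3) (h1 h2 : Fin 3) : Prop := drk i h1 < drk i h2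

/-- A matching `m` is stable for the hospital rank functions `R` (rank `0` is best):
no doctor–hospital pair prefer each other to their partners. -/
def StableFor (R : Fin 3 → Fin 3 → ℕ) (m : Fin 3 ≃ Fin 3) : Prop :=
  ¬ ∃ (i : Fin 3) (h : Fin 3), dpref i h (m i) ∧ R h i < R h (m.symm h)

/-- `m` is the doctor-optimal stable matching for the hospital ranks `R`. -/
def DoctorOptimalStable (R : Fin 3 → Fin 3 → ℕ) (m : Fin 3 ≃ Fin 3) : Prop :=
  StableFor R m ∧
    ∀ m' : Fin 3 ≃ Fin 3, StableFor R m' → ∀ i : Fin 3, m i = m' i ∨ dpref i (m i) (m' i)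

/-- The matching `i1 ↦ B, i2 ↦ C, j ↦ A`. -/
def m1 : Fin 3 ≃ Fin 3 := ⟨![1, 2, 0], ![2, 0, 1], by decide, by decide⟩

/-- The matching `i1 ↦ B, i2 ↦ A, j ↦ C`. -/
def m2 : Fin 3 ≃ Fin 3 := ⟨![1, 0, 2], ![1, 0, 2], by decide, by decide⟩

/-- The allocation `π = (1/2)·δ_{m1} + (1/2)·δ_{m2}`. -/
noncomputable def π : (Fin 3 ≃ Fin 3) → ℝ := fun m =>
  (1 / 2) * (if m = m1 then 1 else 0) + (1 / 2) * (if m = m2 then 1 else 0)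

/-- Explicit composition failure for doctor-proposing Gale–Shapley:
(1) for every profile in which `A`'s order is `j ≻ i1 ≻ i2` or `j ≻ i2 ≻ i1`, `B`'s is
`i1 ≻ i2 ≻ j` or `i2 ≻ i1 ≻ j`, and `C`'s is `i1 ≻ i2 ≻ j` or `i2 ≻ i1 ≻ j`,
if `A` ranks `i1` above `i2` then `m1` is the doctor-optimal stable matching, and
(2) if `A` ranks `i2` above `i1` then `m2` is the doctor-optimal stable matching;
(3) the allocation `π = (1/2)·δ_{m1} + (1/2)·δ_{m2}` is not PIIF: `i1` is matched
to its top choice `A` with probability `0` while `i2` is matched to `A` with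
probability `1/2`, and the prospect of `i1` does not stochastically dominate the
prospect of `i2`. -/
lemma R_eq (R : Fin 3 → Fin 3 → ℕ) : R = ![R 0, R 1, R 2] := by
  funext h i; fin_cases h <;> rfl

lemma prospect_eq (i h : Fin 3) :
    prospect π i h = (1 / 2) * (if m1 i = h then 1 else 0)
      + (1 / 2) * (if m2 i = h then 1 else 0) := by
  unfold prospect π
  have key : ∀ m : Fin 3 ≃ Fin 3,
      (if m i = h then (1 / 2 : ℝ) * (if m = m1 then 1 else 0)
        + (1 / 2) * (if m = m2 then 1 else 0) else 0) =
      (if m = m1 then (1 / 2 : ℝ) * (if m1 i = h then 1 else 0) else 0)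
        + (if m = m2 then (1 / 2 : ℝ) * (if m2 i = h then 1 else 0) else 0) := by
    intro m
    have hne : m1 ≠ m2 := by decide
    split_ifs <;> simp_all <;> ring
  simp_rw [key]
  rw [Finset.sum_add_distrib, Finset.sum_ite_eq' Finset.univ m1,
    Finset.sum_ite_eq' Finset.univ m2]
  simp

lemma prospect00 : prospect π 0 0 = 0 := by
  rw [prospect_eq]; norm_num [m1, m2, Fin.ext_iff]

lemma prospect10 : prospect π 1 0 = 1 / 2 := by
  rw [prospect_eq]; norm_num [m1, m2, Fin.ext_iff]

instance (R : Fin 3 → Fin 3 → ℕ) (m : Fin 3 ≃ Fin 3) : Decidable (StableFor R m) := by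
  unfold StableFor dpref; infer_instance

instance (R : Fin 3 → Fin 3 → ℕ) (m : Fin 3 ≃ Fin 3) :
    Decidable (DoctorOptimalStable R m) := by
  unfold DoctorOptimalStable dpref; infer_instance

lemma not_sdom : ¬ SDom (dpref 0) (prospect π 0) (prospect π 1) := by
  intro hS
  have := hS 0
  have hset : {x : Fin 3 | dpref 0 x 0 ∨ x = 0} = {0} := by
    ext x; fin_cases x <;> simp [dpref, drk]
  rw [hset] at this
  rw [Fin.sum_univ_three, Fin.sum_univ_three] at this
  simp only [Set.indicator, Set.mem_singleton_iff,
    show (1 : Fin 3) ≠ 0 from by decide, show (2 : Fin 3) ≠ 0 from by decide,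
    if_true, if_false, if_pos rfl, if_neg] at this
  rw [prospect00, prospect10] at this
  norm_num at this

theorem doctor_propose_explicit_failure :
    (∀ R : Fin 3 → Fin 3 → ℕ,
      (R 0 = ![1, 2, 0] ∨ R 0 = ![2, 1, 0]) →
      (R 1 = ![0, 1, 2] ∨ R 1 = ![1, 0, 2]) →
      (R 2 = ![0, 1, 2] ∨ R 2 = ![1, 0, 2]) →
      ((R 0 0 < R 0 1 → DoctorOptimalStable R m1) ∧
       (R 0 1 < R 0 0 → DoctorOptimalStable R m2))) ∧
    prospect π 0 0 = 0 ∧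
    prospect π 1 0 = 1 / 2 ∧
    ¬ SDom (dpref 0) (prospect π 0) (prospect π 1) ∧
    ¬ ClusterPIIF c dpref π := by
  refine ⟨?_, prospect00, prospect10, not_sdom, fun hC => not_sdom (hC 0 1 rfl)⟩
  intro R h0 h1 h2
  rw [R_eq R]
  rcases h0 with h0 | h0 <;> rcases h1 with h1 | h1 <;> rcases h2 with h2 | h2 <;>
    rw [h0, h1, h2] <;> exact ⟨by decide, by decide⟩

end Stmt4
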